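/- Unimodality of E{T_n}·E{P_n} in the rate threshold (Lemma 2). Let Φ(G) := e^{2λG} · ∫_G^∞ e^{−λg}/ln(1 + c·g) dg for G > 0. Then there exists a point G‡ > 0 such that Φ is strictly decreasing on (0, G‡] and strictly increasing on [G‡, ∞). -/

import Mathlib

open MeasureTheory Set

namespace UnimodAux

/-- The integrand `e^{-λg}/ln(1+cg)`. -/
noncomputable def f (lam c : ℝ) (g : ℝ) : ℝ := Real.exp (-lam * g) / Real.log (1 + c * g)

/-- `L c x = ln(1 + c x)`. -/
noncomputable def L (c : ℝ) (x : ℝ) : ℝ := Real.log (1 + c * x)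

/-- The tail integral `I(G) = ∫_G^∞ e^{-λg}/ln(1+cg) dg`. -/
noncomputable def II (lam c : ℝ) (G : ℝ) : ℝ := ∫ g in Ioi G, f lam c g

/-- The translated integrand. -/
noncomputable def u (lam c G : ℝ) (t : ℝ) : ℝ := Real.exp (-lam * t) * (L c G / L c (t + G))

/-- `J(G) = ∫_0^∞ e^{-λt} L(G)/L(G+t) dt = e^{λG} L(G) I(G)`. -/
noncomputable def J (lam c : ℝ) (G : ℝ) : ℝ := ∫ t in Ioi 0, u lam c G t

variable {lam c : ℝ}

lemma L_pos (hc : 0 < c) {x : ℝ} (hx : 0 < x) : 0 < L c x :=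
  Real.log_pos (by nlinarith)

lemma L_mono (hc : 0 < c) {x y : ℝ} (hx : 0 < x) (hxy : x ≤ y) : L c x ≤ L c y :=
  Real.log_le_log (by nlinarith) (by nlinarith)

lemma f_pos (hc : 0 < c) {g : ℝ} (hg : 0 < g) : 0 < f lam c g :=
  div_pos (Real.exp_pos _) (L_pos hc hg)

lemma f_contOn (hc : 0 < c) : ContinuousOn (f lam c) (Ioi 0) := by
  intro x hx
  have h1 : (0:ℝ) < 1 + c * x := by have := hx.out; nlinarith
  apply ContinuousAt.continuousWithinAt
  apply ContinuousAt.div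
  · exact (Real.continuous_exp.comp (continuous_const.mul continuous_id)).continuousAt
  · exact ContinuousAt.log (by fun_prop) h1.ne'
  · exact (L_pos hc hx.out).ne'

lemma f_integrableOn (hlam : 0 < lam) (hc : 0 < c) {G : ℝ} (hG : 0 < G) :
    IntegrableOn (f lam c) (Ioi G) := by
  have hmeas : AEStronglyMeasurable (f lam c) (volume.restrict (Ioi G)) :=
    ((f_contOn hc).mono (Ioi_subset_Ioi hG.le)).aestronglyMeasurable measurableSet_Ioi
  have hint : IntegrableOn (fun g => Real.exp (-lam * g) / L c G) (Ioi G) :=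
    (exp_neg_integrableOn_Ioi G hlam).div_const _
  refine Integrable.mono hint hmeas ?_
  filter_upwards [ae_restrict_mem measurableSet_Ioi] with g hg
  have hg0 : 0 < g := hG.trans hg
  rw [Real.norm_eq_abs, Real.norm_eq_abs, abs_of_nonneg (f_pos hc hg0).le,
    abs_of_nonneg (div_nonneg (Real.exp_pos _).le (L_pos hc hG).le)]
  exact div_le_div_of_nonneg_left (Real.exp_pos _).le (L_pos hc hG) (L_mono hc hG hg.le)

lemma II_split (hlam : 0 < lam) (hc : 0 < c) {a x : ℝ} (ha : 0 < a) (hax : a ≤ x) :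
    II lam c x = II lam c a - ∫ t in a..x, f lam c t := by
  have h1 : IntegrableOn (f lam c) (Ioc a x) :=
    (f_integrableOn hlam hc ha).mono_set Ioc_subset_Ioi_self
  have h2 : IntegrableOn (f lam c) (Ioi x) := f_integrableOn hlam hc (ha.trans_le hax)
  have hu := setIntegral_union (Ioc_disjoint_Ioi le_rfl) measurableSet_Ioi h1 h2 (f := f lam c)
  rw [Ioc_union_Ioi_eq_Ioi hax] at hu
  rw [intervalIntegral.integral_of_le hax]
  unfold II
  rw [hu]; ring

lemma II_hasDeriv (hlam : 0 < lam) (hc : 0 < c) {G : ℝ} (hG : 0 < G) :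
    HasDerivAt (II lam c) (-(f lam c G)) G := by
  set a := G / 2 with ha_def
  have ha : 0 < a := half_pos hG
  have haG : a < G := half_lt_self hG
  have hint : IntervalIntegrable (f lam c) volume a G := by
    rw [intervalIntegrable_iff_integrableOn_Ioc_of_le haG.le]
    exact (f_integrableOn hlam hc ha).mono_set Ioc_subset_Ioi_self
  have hmeas : StronglyMeasurableAtFilter (f lam c) (nhds G) :=
    ⟨Ioi 0, Ioi_mem_nhds hG, (f_contOn hc).aestronglyMeasurable measurableSet_Ioi⟩
  have hcont : ContinuousAt (f lam c) G := (f_contOn hc).continuousAt (Ioi_mem_nhds hG)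
  have hKey : HasDerivAt (fun x => II lam c a - ∫ t in a..x, f lam c t) (-(f lam c G)) G :=
    (intervalIntegral.integral_hasDerivAt_right hint hmeas hcont).const_sub _
  refine hKey.congr_of_eventuallyEq ?_
  filter_upwards [Ioi_mem_nhds haG] with x hx
  exact II_split hlam hc ha hx.le

lemma Phi_hasDeriv (hlam : 0 < lam) (hc : 0 < c) {G : ℝ} (hG : 0 < G) :
    HasDerivAt (fun G => Real.exp (2 * lam * G) * II lam c G)
      (Real.exp (2 * lam * G) * (2 * lam * II lam c G - f lam c G)) G := by
  have h1 : HasDerivAt (fun G : ℝ => Real.exp (2 * lam * G))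
      (Real.exp (2 * lam * G) * (2 * lam)) G := by
    simpa using (((hasDerivAt_id G).const_mul (2 * lam)).exp)
  have := h1.mul (II_hasDeriv hlam hc hG)
  rw [show Real.exp (2 * lam * G) * (2 * lam * II lam c G - f lam c G) = Real.exp (2 * lam * G) * (2 * lam) * II lam c G + Real.exp (2 * lam * G) * -(f lam c G) by ring]
  exact this

lemma integral_Ioi_comp_add (h : ℝ → ℝ) (G : ℝ) :
    ∫ g in Ioi G, h g = ∫ t in Ioi 0, h (t + G) := by
  rw [← integral_indicator measurableSet_Ioi, ← integral_indicator measurableSet_Ioi,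
    ← integral_add_right_eq_self ((Ioi G).indicator h) G]
  congr 1
  ext t
  by_cases ht : 0 < t
  · simp [indicator_apply, mem_Ioi, ht, lt_add_iff_pos_left]
  · simp [indicator_apply, mem_Ioi, ht, lt_add_iff_pos_left]

lemma rep (G : ℝ) :
    Real.exp (lam * G) * L c G * II lam c G = J lam c G := by
  unfold II J u
  rw [← integral_const_mul, integral_Ioi_comp_add]
  congr 1
  ext t
  unfold f L
  rw [mul_div_assoc', mul_div_assoc']
  congr 1
  rw [show Real.exp (-lam * t) = Real.exp (lam * G) * Real.exp (-lam * (t + G)) by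
    rw [← Real.exp_add]; ring_nf]
  ring

lemma ratio_mono (hc : 0 < c) {G1 G2 t : ℝ} (h1 : 0 < G1) (h12 : G1 < G2) (ht : 0 < t) :
    L c G1 / L c (t + G1) < L c G2 / L c (t + G2) := by
  set a1 : ℝ := 1 + c * G1 with ha1
  set a2 : ℝ := 1 + c * G2 with ha2
  set s : ℝ := c * t with hs
  have hA1 : (1:ℝ) < a1 := by rw [ha1]; nlinarith
  have hA2 : a1 < a2 := by rw [ha1, ha2]; nlinarith
  have hS : 0 < s := by positivity
  have hpa1 : (0:ℝ) < a1 := by linarith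
  have hpa2 : (0:ℝ) < a2 := by linarith
  have e1 : L c (t + G1) = Real.log a1 + Real.log (1 + s / a1) := by
    unfold L
    rw [show 1 + c * (t + G1) = a1 * (1 + s / a1) by field_simp; ring,
      Real.log_mul hpa1.ne' (by positivity : (0:ℝ) < 1 + s / a1).ne']
  have e2 : L c (t + G2) = Real.log a2 + Real.log (1 + s / a2) := by
    unfold L
    rw [show 1 + c * (t + G2) = a2 * (1 + s / a2) by field_simp; ring,
      Real.log_mul hpa2.ne' (by positivity : (0:ℝ) < 1 + s / a2).ne']
  have l1 : 0 < Real.log a1 := Real.log_pos hA1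
  have l12 : Real.log a1 < Real.log a2 := Real.log_lt_log hpa1 hA2
  have q2pos : 0 < Real.log (1 + s / a2) := Real.log_pos (by have := div_pos hS hpa2; linarith)
  have q21 : Real.log (1 + s / a2) < Real.log (1 + s / a1) := by
    apply Real.log_lt_log (by have := div_pos hS hpa2; linarith)
    have : s / a2 < s / a1 := div_lt_div_of_pos_left hS hpa1 hA2
    linarith
  have key : Real.log a1 * Real.log (1 + s / a2) < Real.log a2 * Real.log (1 + s / a1) :=
    mul_lt_mul'' l12 q21 l1.le q2pos.le
  have d1 : 0 < L c (t + G1) := L_pos hc (by linarith)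
  have d2 : 0 < L c (t + G2) := L_pos hc (by linarith)
  rw [div_lt_div_iff₀ d1 d2, e1, e2]
  have hL1 : L c G1 = Real.log a1 := rfl
  have hL2 : L c G2 = Real.log a2 := rfl
  rw [hL1, hL2]; nlinarith

lemma ratio_le_one (hc : 0 < c) {G t : ℝ} (hG : 0 < G) (ht : 0 < t) :
    L c G / L c (t + G) ≤ 1 := by
  have d : 0 < L c (t + G) := L_pos hc (by linarith)
  rw [div_le_one d]
  exact L_mono hc hG (by linarith)

lemma u_nonneg (hc : 0 < c) {G : ℝ} (hG : 0 < G) {t : ℝ} (ht : 0 < t) : 0 ≤ u lam c G t := by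
  unfold u
  have d : 0 < L c (t + G) := L_pos hc (by linarith)
  exact mul_nonneg (Real.exp_pos _).le (div_nonneg (L_pos hc hG).le d.le)

lemma u_contOn (hc : 0 < c) {G : ℝ} (hG : 0 < G) : ContinuousOn (u lam c G) (Ioi 0) := by
  intro t ht
  have h1 : (0:ℝ) < 1 + c * (t + G) := by have := ht.out; nlinarith
  apply ContinuousAt.continuousWithinAt
  apply ContinuousAt.mul
  · exact (Real.continuous_exp.comp (continuous_const.mul continuous_id)).continuousAt
  · apply ContinuousAt.div continuousAt_const
    · exact ContinuousAt.log (by fun_prop) h1.ne'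
    · exact (L_pos hc (by have := ht.out; linarith : (0:ℝ) < t + G)).ne'

lemma u_integrableOn (hlam : 0 < lam) (hc : 0 < c) {G : ℝ} (hG : 0 < G) :
    IntegrableOn (u lam c G) (Ioi 0) := by
  refine Integrable.mono (exp_neg_integrableOn_Ioi 0 hlam)
    ((u_contOn hc hG).aestronglyMeasurable measurableSet_Ioi) ?_
  filter_upwards [ae_restrict_mem measurableSet_Ioi] with t ht
  rw [Real.norm_eq_abs, Real.norm_eq_abs, abs_of_nonneg (u_nonneg hc hG ht),
    abs_of_nonneg (Real.exp_pos _).le]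
  unfold u
  calc Real.exp (-lam * t) * (L c G / L c (t + G)) ≤ Real.exp (-lam * t) * 1 :=
        mul_le_mul_of_nonneg_left (ratio_le_one hc hG ht) (Real.exp_pos _).le
    _ = Real.exp (-lam * t) := mul_one _

lemma J_strictMono (hlam : 0 < lam) (hc : 0 < c) :
    StrictMonoOn (J lam c) (Ioi 0) := by
  intro G1 h1 G2 h2 h12
  have hint1 := u_integrableOn (lam := lam) hlam hc h1.out
  have hint2 := u_integrableOn (lam := lam) hlam hc h2.out
  have hdiff : 0 < ∫ t in Ioi 0, (u lam c G2 t - u lam c G1 t) := by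
    rw [setIntegral_pos_iff_support_of_nonneg_ae]
    · have hsub : Ioi (0:ℝ) ⊆ (Function.support fun t => u lam c G2 t - u lam c G1 t) ∩ Ioi 0 := by
        intro t ht
        refine ⟨?_, ht⟩
        have hr := ratio_mono hc h1.out h12 ht.out
        have hlt : u lam c G1 t < u lam c G2 t := by
          unfold u
          exact mul_lt_mul_of_pos_left hr (Real.exp_pos _)
        exact Function.mem_support.mpr (sub_ne_zero.mpr hlt.ne')
      refine lt_of_lt_of_le ?_ (measure_mono hsub)
      simp [Real.volume_Ioi]
    · filter_upwards [ae_restrict_mem measurableSet_Ioi] with t ht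
      have hr := ratio_mono hc h1.out h12 ht.out
      have hle : u lam c G1 t ≤ u lam c G2 t := by
        unfold u
        exact le_of_lt (mul_lt_mul_of_pos_left hr (Real.exp_pos _))
      simpa using sub_nonneg.mpr hle
    · exact hint2.sub hint1
  have hs := integral_sub hint2 hint1
  unfold J
  rw [hs] at hdiff
  linarith

lemma small (hlam : 0 < lam) (hc : 0 < c) :
    ∃ Ga : ℝ, 0 < Ga ∧ 2 * lam * J lam c Ga < 1 := by
  set δ : ℝ := 1 / (8 * lam) with hδdef
  have hδ : 0 < δ := by positivity
  set M : ℝ := ∫ t in Ioi (0:ℝ), Real.exp (-lam * t) with hMdef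
  have hM0 : 0 ≤ M := setIntegral_nonneg measurableSet_Ioi (fun t _ => (Real.exp_pos _).le)
  have hLδ : 0 < L c δ := L_pos hc hδ
  set Ga : ℝ := min δ (L c δ / (c * (4 * lam * M + 1))) with hGadef
  have hden : 0 < c * (4 * lam * M + 1) := by positivity
  have hGa : 0 < Ga := lt_min hδ (by positivity)
  have hGaδ : Ga ≤ δ := min_le_left _ _
  refine ⟨Ga, hGa, ?_⟩
  have hLGa : L c Ga * (4 * lam * M + 1) ≤ L c δ := by
    have h1 : L c Ga ≤ c * Ga := by
      have h := Real.log_le_sub_one_of_pos (show (0:ℝ) < 1 + c * Ga by positivity)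
      unfold L; linarith
    have h2 : c * Ga ≤ c * (L c δ / (c * (4 * lam * M + 1))) :=
      mul_le_mul_of_nonneg_left (min_le_right _ _) hc.le
    have h3 : c * (L c δ / (c * (4 * lam * M + 1))) = L c δ / (4 * lam * M + 1) := by
      field_simp
    have h4 : L c Ga ≤ L c δ / (4 * lam * M + 1) := by rw [← h3]; linarith
    calc L c Ga * (4 * lam * M + 1) ≤ (L c δ / (4 * lam * M + 1)) * (4 * lam * M + 1) := by
          apply mul_le_mul_of_nonneg_right h4; positivity
      _ = L c δ := by field_simp
  have hsplit : J lam c Ga = (∫ t in Ioc 0 δ, u lam c Ga t) + ∫ t in Ioi δ, u lam c Ga t := by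
    unfold J
    rw [← setIntegral_union (Ioc_disjoint_Ioi le_rfl) measurableSet_Ioi
      ((u_integrableOn hlam hc hGa).mono_set Ioc_subset_Ioi_self)
      ((u_integrableOn hlam hc hGa).mono_set (Ioi_subset_Ioi hδ.le)),
      Ioc_union_Ioi_eq_Ioi hδ.le]
  have hb1 : (∫ t in Ioc 0 δ, u lam c Ga t) ≤ δ := by
    have hle : (∫ t in Ioc 0 δ, u lam c Ga t) ≤ ∫ _t in Ioc 0 δ, (1:ℝ) := by
      apply setIntegral_mono_on ((u_integrableOn hlam hc hGa).mono_set Ioc_subset_Ioi_self)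
        (integrableOn_const measure_Ioc_lt_top.ne) measurableSet_Ioc
      intro t ht
      have h1 : Real.exp (-lam * t) ≤ 1 := Real.exp_le_one_iff.mpr (by nlinarith [ht.1])
      have h2 := ratio_le_one hc hGa ht.1
      have h0 : 0 ≤ L c Ga / L c (t + Ga) :=
        div_nonneg (L_pos hc hGa).le (L_pos hc (by linarith [ht.1] : (0:ℝ) < t + Ga)).le
      unfold u
      nlinarith [Real.exp_pos (-lam * t)]
    calc (∫ t in Ioc 0 δ, u lam c Ga t) ≤ ∫ _t in Ioc 0 δ, (1:ℝ) := hle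
      _ = δ := by simp [Real.volume_Ioc, ENNReal.toReal_ofReal hδ.le, hδ.le]
  have hb2 : (∫ t in Ioi δ, u lam c Ga t) ≤ (L c Ga / L c δ) * M := by
    have hle : (∫ t in Ioi δ, u lam c Ga t)
        ≤ ∫ t in Ioi δ, (L c Ga / L c δ) * Real.exp (-lam * t) := by
      apply setIntegral_mono_on ((u_integrableOn hlam hc hGa).mono_set (Ioi_subset_Ioi hδ.le))
        ((exp_neg_integrableOn_Ioi δ hlam).const_mul _) measurableSet_Ioi
      intro t ht
      have htδ : δ < t := ht
      have hLt : L c δ ≤ L c (t + Ga) := L_mono hc hδ (by linarith)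
      unfold u
      rw [mul_comm (L c Ga / L c δ)]
      apply mul_le_mul_of_nonneg_left _ (Real.exp_pos _).le
      exact div_le_div_of_nonneg_left (L_pos hc hGa).le hLδ hLt
    have h2 : (∫ t in Ioi δ, (L c Ga / L c δ) * Real.exp (-lam * t))
        = (L c Ga / L c δ) * ∫ t in Ioi δ, Real.exp (-lam * t) := integral_const_mul _ _
    have h3 : (∫ t in Ioi δ, Real.exp (-lam * t)) ≤ M := by
      rw [hMdef]
      apply setIntegral_mono_set (exp_neg_integrableOn_Ioi 0 hlam)
        (Filter.Eventually.of_forall (fun t => (Real.exp_pos _).le))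
        ((Ioi_subset_Ioi hδ.le).eventuallyLE)
    have h4 : 0 ≤ L c Ga / L c δ := div_nonneg (L_pos hc hGa).le hLδ.le
    calc (∫ t in Ioi δ, u lam c Ga t) ≤ (L c Ga / L c δ) * ∫ t in Ioi δ, Real.exp (-lam * t) := by
          rw [← h2]; exact hle
      _ ≤ (L c Ga / L c δ) * M := mul_le_mul_of_nonneg_left h3 h4
  have hJ : J lam c Ga ≤ δ + (L c Ga / L c δ) * M := by rw [hsplit]; linarith
  have hR : (L c Ga / L c δ) * (4 * lam * M + 1) ≤ 1 := by
    rw [div_mul_eq_mul_div, div_le_one hLδ]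
    exact hLGa
  have hR0 : 0 ≤ L c Ga / L c δ := div_nonneg (L_pos hc hGa).le hLδ.le
  have hδval : 2 * lam * δ = 1 / 4 := by rw [hδdef]; field_simp; ring
  nlinarith [mul_le_mul_of_nonneg_left hJ (by positivity : (0:ℝ) ≤ 2 * lam),
    mul_le_mul_of_nonneg_left hR (by positivity : (0:ℝ) ≤ lam)]

lemma large (hlam : 0 < lam) (hc : 0 < c) :
    ∃ Gb : ℝ, 0 < Gb ∧ 1 < 2 * lam * J lam c Gb := by
  set T : ℝ := 2 / lam with hTdef
  have hT : 0 < T := by positivity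
  have h1cT : 1 < 1 + c * T := by nlinarith
  set Gb : ℝ := ((1 + c * T) ^ 3 - 1) / c with hGbdef
  have hpow : 1 < (1 + c * T) ^ 3 := one_lt_pow₀ h1cT (by norm_num)
  have hGb0 : 0 < Gb := div_pos (by linarith) hc
  refine ⟨Gb, hGb0, ?_⟩
  have hcGb : 1 + c * Gb = (1 + c * T) ^ 3 := by rw [hGbdef]; field_simp; ring
  have hLGb : L c Gb = 3 * Real.log (1 + c * T) := by
    unfold L
    rw [hcGb, Real.log_pow]
    push_cast; ring
  have hLGb0 : 0 < L c Gb := L_pos hc hGb0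
  have hLTGb0 : 0 < L c (T + Gb) := L_pos hc (by linarith)
  have hRat : L c (T + Gb) ≤ (4 / 3) * L c Gb := by
    have hfac : 1 + c * (T + Gb) = (1 + c * Gb) * (1 + c * T / (1 + c * Gb)) := by
      have hpos1 : (0:ℝ) < 1 + c * Gb := by nlinarith
      field_simp; ring
    have hpos1 : (0:ℝ) < 1 + c * Gb := by nlinarith
    have hpos2 : (0:ℝ) < 1 + c * T / (1 + c * Gb) := by positivity
    have hlog : L c (T + Gb) = Real.log (1 + c * Gb) + Real.log (1 + c * T / (1 + c * Gb)) := by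
      unfold L
      rw [hfac, Real.log_mul hpos1.ne' hpos2.ne']
    rw [hlog]
    have h1 : Real.log (1 + c * T / (1 + c * Gb)) ≤ Real.log (1 + c * T) := by
      apply Real.log_le_log (by positivity)
      have hd : c * T / (1 + c * Gb) ≤ c * T := by
        apply div_le_self (by positivity) (by nlinarith)
      linarith
    have h2 : Real.log (1 + c * Gb) = L c Gb := rfl
    rw [h2, hLGb] at *
    nlinarith [Real.log_pos h1cT]
  have hrat : 3 / 4 ≤ L c Gb / L c (T + Gb) := by
    rw [le_div_iff₀ hLTGb0]; linarith
  have hIexp : (∫ t in Ioc 0 T, Real.exp (-lam * t)) = (1 - Real.exp (-lam * T)) / lam := by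
    rw [← intervalIntegral.integral_of_le hT.le]
    have hd : ∀ t ∈ uIcc (0:ℝ) T,
        HasDerivAt (fun t => -Real.exp (-lam * t) / lam) (Real.exp (-lam * t)) t := by
      intro t _
      have h1 : HasDerivAt (fun t : ℝ => -lam * t) (-lam) t := by
        simpa using (hasDerivAt_id t).const_mul (-lam)
      have h2 := (h1.exp.div_const lam).neg
      have h3 : HasDerivAt (fun t => -Real.exp (-lam * t) / lam) (-(Real.exp (-lam * t) * -lam / lam)) t := by
        have e : (fun t => -Real.exp (-lam * t) / lam) = -fun x => Real.exp (-lam * x) / lam := by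
          funext x; simp [neg_div]
        rw [e]; exact h2
      refine h3.congr_deriv ?_
      rw [mul_neg, neg_div, neg_neg, mul_div_assoc, div_self hlam.ne', mul_one]
    rw [intervalIntegral.integral_eq_sub_of_hasDerivAt hd
      ((Real.continuous_exp.comp (continuous_const.mul continuous_id)).intervalIntegrable _ _)]
    simp [Real.exp_zero]
    ring
  have hexpT : Real.exp (-lam * T) ≤ 1 / 4 := by
    have hval : -lam * T = -2 := by rw [hTdef]; field_simp
    rw [hval]
    have h4 : (4:ℝ) ≤ Real.exp 2 := by
      have h := Real.add_one_le_exp (1:ℝ)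
      have he2 : Real.exp 2 = Real.exp 1 * Real.exp 1 := by rw [← Real.exp_add]; norm_num
      nlinarith
    rw [show (-2:ℝ) = -(2:ℝ) by norm_num, Real.exp_neg]
    rw [inv_le_comm₀ _ (by norm_num)]
    · norm_num; linarith
    · positivity
  have hstep1 : (∫ t in Ioc 0 T, u lam c Gb t) ≤ J lam c Gb := by
    unfold J
    apply setIntegral_mono_set (u_integrableOn hlam hc hGb0)
      ?_ (Ioc_subset_Ioi_self).eventuallyLE
    filter_upwards [ae_restrict_mem measurableSet_Ioi] with t ht
    exact u_nonneg hc hGb0 ht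
  have hstep2 : (∫ t in Ioc 0 T, (L c Gb / L c (T + Gb)) * Real.exp (-lam * t))
      ≤ ∫ t in Ioc 0 T, u lam c Gb t := by
    apply setIntegral_mono_on
      (((exp_neg_integrableOn_Ioi 0 hlam).mono_set Ioc_subset_Ioi_self).const_mul _)
      ((u_integrableOn hlam hc hGb0).mono_set Ioc_subset_Ioi_self) measurableSet_Ioc
    intro t ht
    have hLt : L c (t + Gb) ≤ L c (T + Gb) := L_mono hc (by linarith [ht.1]) (by linarith [ht.2])
    unfold u
    rw [mul_comm (L c Gb / L c (T + Gb))]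
    apply mul_le_mul_of_nonneg_left _ (Real.exp_pos _).le
    exact div_le_div_of_nonneg_left hLGb0.le (L_pos hc (by linarith [ht.1])) hLt
  have hval : (∫ t in Ioc 0 T, (L c Gb / L c (T + Gb)) * Real.exp (-lam * t))
      = (L c Gb / L c (T + Gb)) * ((1 - Real.exp (-lam * T)) / lam) := by
    rw [integral_const_mul, hIexp]
  have hJge : (L c Gb / L c (T + Gb)) * ((1 - Real.exp (-lam * T)) / lam) ≤ J lam c Gb := by
    rw [← hval]; exact le_trans hstep2 hstep1
  have hfin : (3/4 : ℝ) * ((3/4) / lam) ≤ J lam c Gb := by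
    refine le_trans ?_ hJge
    have h34 : (3/4:ℝ)/lam ≤ (1 - Real.exp (-lam * T))/lam := by gcongr ?_ / lam; linarith
    exact mul_le_mul hrat h34 (by positivity) (div_nonneg hLGb0.le hLTGb0.le)
  have harith : 2 * lam * ((3/4 : ℝ) * ((3/4) / lam)) = 9/8 := by field_simp; ring
  nlinarith [mul_le_mul_of_nonneg_left hfin (by positivity : (0:ℝ) ≤ 2 * lam)]

/-- The sign of the derivative factor is the sign of `2λJ(G) - 1`. -/
lemma sign_eq (hlam : 0 < lam) (hc : 0 < c) {G : ℝ} (hG : 0 < G) :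
    2 * lam * II lam c G - f lam c G
      = (2 * lam * J lam c G - 1) * (Real.exp (-lam * G) / L c G) := by
  have hL := L_pos hc hG
  have hrep := rep (lam := lam) (c := c) G
  have h1 : J lam c G * (Real.exp (-lam * G) / L c G) = II lam c G := by
    calc J lam c G * (Real.exp (-lam * G) / L c G)
        = (Real.exp (lam * G) * L c G * II lam c G) * (Real.exp (-lam * G) / L c G) := by
          rw [hrep]
      _ = (Real.exp (lam * G) * Real.exp (-lam * G)) * (L c G / L c G) * II lam c G := by ring
      _ = II lam c G := by
          rw [← Real.exp_add, div_self hL.ne']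
          simp
  have hf : f lam c G = Real.exp (-lam * G) / L c G := rfl
  rw [hf]
  linear_combination (-(2 * lam)) * h1

end UnimodAux

open UnimodAux in
/-- Unimodality of `E{T_n}·E{P_n}` in the rate threshold (Lemma 2):
`Φ(G) = e^{2λG} · ∫_G^∞ e^{−λg}/ln(1+c·g) dg` is strictly decreasing on `(0, G‡]`
and strictly increasing on `[G‡, ∞)` for some `G‡ > 0`. -/
theorem unimodality_Phi (lam c : ℝ) (hlam : 0 < lam) (hc : 0 < c) :
    ∃ Gd : ℝ, 0 < Gd ∧
      StrictAntiOn
        (fun G : ℝ => Real.exp (2 * lam * G) *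
          ∫ g in Set.Ioi G, Real.exp (-lam * g) / Real.log (1 + c * g))
        (Set.Ioc 0 Gd) ∧
      StrictMonoOn
        (fun G : ℝ => Real.exp (2 * lam * G) *
          ∫ g in Set.Ioi G, Real.exp (-lam * g) / Real.log (1 + c * g))
        (Set.Ici Gd) := by
  obtain ⟨Ga, hGa0, hGa⟩ := small hlam hc
  obtain ⟨Gb, hGb0, hGb⟩ := large hlam hc
  set S : Set ℝ := {G | 0 < G ∧ 2 * lam * J lam c G < 1} with hSdef
  have hGaS : Ga ∈ S := ⟨hGa0, hGa⟩
  have hne : S.Nonempty := ⟨Ga, hGaS⟩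
  have hbdd : ∀ G ∈ S, G ≤ Gb := by
    intro G hG
    by_contra h
    push_neg at h
    have hmono := J_strictMono hlam hc (mem_Ioi.mpr hGb0) (mem_Ioi.mpr (hGb0.trans h)) h
    nlinarith [hG.2]
  have hbddAbove : BddAbove S := ⟨Gb, fun G hG => hbdd G hG⟩
  set Gd : ℝ := sSup S with hGddef
  have hGdpos : 0 < Gd := lt_of_lt_of_le hGa0 (le_csSup hbddAbove hGaS)
  have hneg : ∀ G, 0 < G → G < Gd → 2 * lam * J lam c G < 1 := by
    intro G h0 hlt
    obtain ⟨s, hsS, hGs⟩ := exists_lt_of_lt_csSup hne hlt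
    have hmono := J_strictMono hlam hc (mem_Ioi.mpr h0) (mem_Ioi.mpr hsS.1) hGs
    nlinarith [hsS.2]
  have hposs : ∀ G, Gd < G → 1 < 2 * lam * J lam c G := by
    intro G hlt
    by_contra h
    push_neg at h
    set G' : ℝ := (Gd + G) / 2 with hG'def
    have h1 : Gd < G' := by rw [hG'def]; linarith
    have h2 : G' < G := by rw [hG'def]; linarith
    have h3 : 0 < G' := lt_trans hGdpos h1
    have hm := J_strictMono hlam hc (mem_Ioi.mpr h3) (mem_Ioi.mpr (h3.trans h2)) h2
    have hG'S : G' ∈ S := ⟨h3, by nlinarith⟩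
    have := le_csSup hbddAbove hG'S
    linarith
  refine ⟨Gd, hGdpos, ?_, ?_⟩
  · show StrictAntiOn (fun G : ℝ => Real.exp (2 * lam * G) * II lam c G) (Set.Ioc 0 Gd)
    apply strictAntiOn_of_deriv_neg (convex_Ioc 0 Gd)
    · intro x hx
      exact ((Phi_hasDeriv hlam hc hx.1).continuousAt).continuousWithinAt
    · intro x hx
      rw [interior_Ioc] at hx
      rw [(Phi_hasDeriv hlam hc hx.1).deriv]
      apply mul_neg_of_pos_of_neg (Real.exp_pos _)
      rw [sign_eq hlam hc hx.1]
      apply mul_neg_of_neg_of_pos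
      · linarith [hneg x hx.1 hx.2]
      · exact div_pos (Real.exp_pos _) (L_pos hc hx.1)
  · show StrictMonoOn (fun G : ℝ => Real.exp (2 * lam * G) * II lam c G) (Set.Ici Gd)
    apply strictMonoOn_of_deriv_pos (convex_Ici Gd)
    · intro x hx
      exact ((Phi_hasDeriv hlam hc (lt_of_lt_of_le hGdpos hx)).continuousAt).continuousWithinAt
    · intro x hx
      rw [interior_Ici] at hx
      have hx0 : 0 < x := lt_trans hGdpos hx
      rw [(Phi_hasDeriv hlam hc hx0).deriv]
      apply mul_pos (Real.exp_pos _)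
      rw [sign_eq hlam hc hx0]
      apply mul_pos
      · linarith [hposs x hx]
      · exact div_pos (Real.exp_pos _) (L_pos hc hx0)
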